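/- There is no self-orthogonal quantum Latin square of dimension 2. -/

import Mathlib

noncomputable section

/-- The inner product on a complex inner product space, as a function into `ℂ`. -/
def ip {E : Type*} [NormedAddCommGroup E] [InnerProductSpace ℂ E] (x y : E) : ℂ :=
  inner ℂ x y

/-- Entrywise complex conjugation of a vector in `ℂ^ι` (in the standard basis). -/
def conjE {ι : Type*} [Fintype ι] (v : EuclideanSpace ℂ ι) : EuclideanSpace ℂ ι :=
  WithLp.toLp 2 (fun k => star (v k))

/-- A quantum Latin square of dimension `d`: a `d × d` array of vectors in `ℂ^d`
whose rows and columns are orthonormal bases (orthonormal families of `d` vectors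
in the `d`-dimensional space `ℂ^d`). -/
def IsQLS {d : ℕ} (Φ : Fin d → Fin d → EuclideanSpace ℂ (Fin d)) : Prop :=
  (∀ i, Orthonormal ℂ (Φ i)) ∧ (∀ j, Orthonormal ℂ (fun i => Φ i j))

/-- Two `d × d` arrays of vectors are orthogonal quantum Latin squares:
`⟨Φ_{i,j},Φ_{i',j'}⟩⟨Ψ_{i,j},Ψ_{i',j'}⟩ = δ_{ii'}δ_{jj'}`, i.e. the tensor products
`Φ_{i,j} ⊗ Ψ_{i,j}` form an orthonormal basis of `ℂ^d ⊗ ℂ^d`. -/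
def OrthQLS {d : ℕ} (Φ Ψ : Fin d → Fin d → EuclideanSpace ℂ (Fin d)) : Prop :=
  ∀ i j i' j', ip (Φ i j) (Φ i' j') * ip (Ψ i j) (Ψ i' j') =
    if i = i' ∧ j = j' then 1 else 0

/-- A self-orthogonal quantum Latin square: a quantum Latin square that is
orthogonal to its conjugate transpose, i.e.
`⟨Φ_{i,j},Φ_{i',j'}⟩ ⋅ conj ⟨Φ_{j,i},Φ_{j',i'}⟩ = δ_{ii'}δ_{jj'}`
(the vectors `Φ_{i,j} ⊗ conj (Φ_{j,i})` form an orthonormal basis of `ℂ^d ⊗ ℂ^d`). -/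
def IsSOQLS {d : ℕ} (Φ : Fin d → Fin d → EuclideanSpace ℂ (Fin d)) : Prop :=
  IsQLS Φ ∧ OrthQLS Φ (fun i j => conjE (Φ j i))

lemma ip_conjE {ι : Type*} [Fintype ι] (x y : EuclideanSpace ℂ ι) :
    ip (conjE x) (conjE y) = star (ip x y) := by
  simp only [ip, conjE, PiLp.inner_apply, RCLike.inner_apply, starRingEnd_apply, star_sum,
    star_mul', star_star]

/-- There is no self-orthogonal quantum Latin square of dimension 2. -/
theorem no_soqls_dim_two :
    ¬ ∃ Φ : Fin 2 → Fin 2 → EuclideanSpace ℂ (Fin 2), IsSOQLS Φ := by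
  rintro ⟨Φ, ⟨⟨hrow, hcol⟩, horth⟩⟩
  -- ⟨Φ00, Φ11⟩ = 0
  have h1 : ip (Φ 0 0) (Φ 1 1) = 0 := by
    have := horth 0 0 1 1
    simp only [show ¬((0 : Fin 2) = 1 ∧ (0 : Fin 2) = 1) by decide, if_neg] at this
    rw [ip_conjE] at this
    have h := this
    have h' : (Complex.normSq (ip (Φ 0 0) (Φ 1 1)) : ℂ) = 0 := by
      rw [← Complex.mul_conj]
      simpa [Complex.star_def] using h
    exact Complex.normSq_eq_zero.mp (by exact_mod_cast h')
  -- ⟨Φ10, Φ00⟩ = 0 from column 0 orthonormality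
  have h2 : ip (Φ 1 0) (Φ 0 0) = 0 := by
    have := (hcol 0).2 (i := 1) (j := 0) (by decide)
    simpa [ip] using this
  have h3 : ip (Φ 1 1) (Φ 0 0) = 0 := by
    have : ip (Φ 1 1) (Φ 0 0) = star (ip (Φ 0 0) (Φ 1 1)) := by
      unfold ip
      exact (inner_conj_symm (𝕜 := ℂ) (Φ 1 1) (Φ 0 0)).symm
    rw [this, h1, star_zero]
  -- row 1 spans everything
  have hspan : Submodule.span ℂ (Set.range (Φ 1)) = ⊤ := by
    apply (hrow 1).linearIndependent.span_eq_top_of_card_eq_finrank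
    simp [finrank_euclideanSpace]
  have hmem : Φ 0 0 ∈ (Submodule.span ℂ (Set.range (Φ 1)))ᗮ := by
    rw [Submodule.mem_orthogonal]
    intro u hu
    induction hu using Submodule.span_induction with
    | mem x hx =>
      obtain ⟨j, rfl⟩ := hx
      fin_cases j
      · exact h2
      · exact h3
    | zero => simp
    | add x y _ _ hx hy => rw [inner_add_left, hx, hy, add_zero]
    | smul c x _ hx => rw [inner_smul_left, hx, mul_zero]
  rw [hspan, Submodule.top_orthogonal_eq_bot, Submodule.mem_bot] at hmem
  have hnorm : ‖Φ 0 0‖ = 1 := (hrow 0).1 0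
  rw [hmem] at hnorm
  simp at hnorm
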